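/- arXiv:1407.2436 — 3 statements merged into one kernel-verified Lean document; each statement's English description precedes it below -/
import Mathlib

section
/- For λ > 0 there exists a constant C > 0 such that |D_{λ,x} P_t^λ(x,y)| ≤ C / ((x-y)² + t²) for all x, y, t ∈ (0,∞). -/
open MeasureTheory Real Set

/-- The Bessel–Poisson kernel `P_t^λ(x,y)`. -/
noncomputable def besselPoissonKernel (l x y t : ℝ) : ℝ :=
  2 * l * (x * y) ^ l * t / π *
    ∫ θ in (0:ℝ)..π, Real.sin θ ^ (2 * l - 1) /
      ((x - y) ^ 2 + t ^ 2 + 2 * x * y * (1 - Real.cos θ)) ^ (l + 1)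

/-- `D_{λ,x} P_t^λ(x,y)`, where `D_λ = x^λ ∂_x x^{-λ}`. -/
noncomputable def DxBesselPoissonKernel (l x y t : ℝ) : ℝ :=
  -(4 * l * (l + 1) / π) * (x * y) ^ l * t *
    ∫ θ in (0:ℝ)..π, Real.sin θ ^ (2 * l - 1) * (x - y * Real.cos θ) /
      ((x - y) ^ 2 + t ^ 2 + 2 * x * y * (1 - Real.cos θ)) ^ (l + 2)

lemma sin_rpow_integrable {p : ℝ} (hp : -1 < p) :
    IntervalIntegrable (fun θ => Real.sin θ ^ p) volume 0 π := by
  rcases le_or_gt 0 p with hp0 | hp0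
  · exact (Real.continuous_sin.rpow_const (fun x => Or.inr hp0)).intervalIntegrable 0 π
  · have h1 : IntervalIntegrable (fun θ => Real.sin θ ^ p) volume 0 (π/2) := by
      have hg : IntervalIntegrable (fun θ : ℝ => (2/π) ^ p * θ ^ p) volume 0 (π/2) :=
        (intervalIntegral.intervalIntegrable_rpow' hp).const_mul _
      apply hg.mono_fun
      · apply Measurable.aestronglyMeasurable
        fun_prop
      · rw [Filter.EventuallyLE, ae_restrict_iff' measurableSet_uIoc]
        filter_upwards with θ hθ
        rw [Set.uIoc_of_le (by positivity : (0:ℝ) ≤ π/2)] at hθ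
        have hθ1 : 0 < θ := hθ.1
        have hθ2 : θ ≤ π/2 := hθ.2
        have hsin : 2/π * θ ≤ Real.sin θ := Real.mul_le_sin hθ1.le hθ2
        have hsinpos : 0 < Real.sin θ := lt_of_lt_of_le (by positivity) hsin
        have hb : Real.sin θ ^ p ≤ (2/π * θ) ^ p :=
          Real.rpow_le_rpow_of_nonpos (by positivity) hsin hp0.le
        have : (2/π * θ) ^ p = (2/π) ^ p * θ ^ p :=
          Real.mul_rpow (by positivity) hθ1.le
        rw [Real.norm_eq_abs, Real.norm_eq_abs, abs_of_nonneg (Real.rpow_nonneg hsinpos.le p)]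
        rw [abs_of_nonneg (by positivity)]
        rw [this] at hb
        exact hb
    have h2 : IntervalIntegrable (fun θ => Real.sin θ ^ p) volume (π/2) π := by
      have := (h1.comp_sub_left π).symm
      simp only [sub_zero] at this
      have heq : (fun x => Real.sin (π - x) ^ p) = fun x => Real.sin x ^ p := by
        funext x; rw [Real.sin_pi_sub]
      rw [heq, show π - π/2 = π/2 by ring] at this
      exact this
    exact h1.trans h2

lemma add_rpow_ge {a b l : ℝ} (ha : 0 < a) (hb : 0 ≤ b) (hl : 0 ≤ l) :
    a * b ^ l ≤ (a + b) ^ (l + 1) := by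
  have hab : 0 < a + b := by linarith
  rw [Real.rpow_add_one hab.ne']
  have h1 : b ^ l ≤ (a + b) ^ l := Real.rpow_le_rpow hb (by linarith) hl
  have h2 : (0:ℝ) ≤ (a+b) ^ l := Real.rpow_nonneg hab.le l
  calc a * b ^ l ≤ (a + b) * ((a+b) ^ l) := by
        apply mul_le_mul (by linarith) h1 (Real.rpow_nonneg hb l) hab.le
  _ = (a+b) ^ l * (a+b) := by ring

lemma abs_bound {x y t c : ℝ} (hx : 0 < x) (hy : 0 < y) (ht : 0 < t) (h1 : -1 ≤ c) (h2 : c ≤ 1) :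
    t * |x - y * c| ≤ 5 * ((x - y) ^ 2 + t ^ 2 + 2 * x * y * (1 - c)) := by
  set A := (x - y) ^ 2 + t ^ 2 + 2 * x * y * (1 - c) with hA
  have h1c : 0 ≤ 1 - c := by linarith
  have hxy : 0 ≤ 2 * x * y * (1 - c) := by positivity
  have hApos : 0 < A := by nlinarith [sq_nonneg (x - y), sq_nonneg t]
  have htA : t ^ 2 ≤ A := by nlinarith [sq_nonneg (x - y)]
  have habs : |x - y * c| ≤ |x - y| + y * (1 - c) := by
    have he : x - y * c = (x - y) + y * (1 - c) := by ring
    rw [he]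
    calc |(x - y) + y * (1 - c)| ≤ |x - y| + |y * (1 - c)| := abs_add_le _ _
    _ = |x - y| + y * (1 - c) := by
          rw [abs_of_nonneg (show (0:ℝ) ≤ y * (1 - c) by positivity)]
  have hterm1 : t * |x - y| ≤ A / 2 := by
    nlinarith [sq_nonneg (t - |x - y|), sq_abs (x - y), abs_nonneg (x - y)]
  have hterm2 : t * (y * (1 - c)) ≤ 4.5 * A := by
    have hu : 0 ≤ t * (y * (1 - c)) := by positivity
    rcases le_or_gt y (2 * x) with hcase | hcase
    · have k2 : 2 * x * y * (1 - c) ≤ A := by nlinarith [sq_nonneg (x - y)]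
      have s1 : y * y * (1 - c) ≤ A := by
        nlinarith [mul_nonneg (mul_nonneg (sub_nonneg.2 hcase) hy.le) h1c, sq_nonneg (x - y)]
      have hsq : (t * (y * (1 - c))) ^ 2 ≤ 2 * A ^ 2 := by
        have e : (t * (y * (1 - c))) ^ 2 = t ^ 2 * (y * y * (1 - c)) * (1 - c) := by ring
        rw [e]
        have p1 : t ^ 2 * (y * y * (1 - c)) ≤ A * A :=
          mul_le_mul htA s1 (by positivity) hApos.le
        calc t ^ 2 * (y * y * (1 - c)) * (1 - c) ≤ (A * A) * 2 :=
              mul_le_mul p1 (by linarith) h1c (by positivity)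
        _ = 2 * A ^ 2 := by ring
      nlinarith [hsq, hApos, hu]
    · have k1 : y ^ 2 ≤ 4 * A := by nlinarith [sq_nonneg t]
      have k3 : (1 - c) ^ 2 ≤ 4 := by nlinarith
      have hsq : (t * (y * (1 - c))) ^ 2 ≤ 16 * A ^ 2 := by
        have e : (t * (y * (1 - c))) ^ 2 = t ^ 2 * y ^ 2 * (1 - c) ^ 2 := by ring
        rw [e]
        have p1 : t ^ 2 * y ^ 2 ≤ A * (4 * A) :=
          mul_le_mul htA k1 (sq_nonneg y) hApos.le
        calc t ^ 2 * y ^ 2 * (1 - c) ^ 2 ≤ (A * (4 * A)) * 4 :=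
              mul_le_mul p1 k3 (sq_nonneg _) (by positivity)
        _ = 16 * A ^ 2 := by ring
      nlinarith [hsq, hApos, hu]
  calc t * |x - y * c| ≤ t * (|x - y| + y * (1 - c)) :=
        mul_le_mul_of_nonneg_left habs ht.le
  _ = t * |x - y| + t * (y * (1 - c)) := by ring
  _ ≤ A / 2 + 4.5 * A := by linarith
  _ = 5 * A := by ring

lemma sin_rpow_le {l : ℝ} (hl : 0 < l) {θ : ℝ} (h0 : 0 ≤ θ) (hpi : θ ≤ π/2) :
    Real.sin θ ^ (2*l-1) ≤ (1 + (π/2)^(1-2*l)) * θ ^ (2*l-1) := by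
  have hMl : (1:ℝ) ≤ 1 + (π/2)^(1-2*l) :=
    le_add_of_nonneg_right (Real.rpow_nonneg (by positivity) _)
  have hsin0 : 0 ≤ Real.sin θ :=
    Real.sin_nonneg_of_nonneg_of_le_pi h0 (by linarith [Real.pi_pos])
  rcases le_or_gt 0 (2*l-1) with hp | hp
  · have h1 : Real.sin θ ^ (2*l-1) ≤ θ ^ (2*l-1) :=
      Real.rpow_le_rpow hsin0 (Real.sin_le h0) hp
    exact h1.trans (le_mul_of_one_le_left (Real.rpow_nonneg h0 _) hMl)
  · rcases eq_or_lt_of_le h0 with h0' | h0'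
    · rw [← h0', Real.sin_zero, Real.zero_rpow (by linarith : 2*l-1 ≠ 0)]
      positivity
    · have hsin : 2/π * θ ≤ Real.sin θ := Real.mul_le_sin h0'.le hpi
      have h2 : Real.sin θ ^ (2*l-1) ≤ (2/π * θ) ^ (2*l-1) :=
        Real.rpow_le_rpow_of_nonpos (by positivity) hsin hp.le
      have h3 : (2/π * θ) ^ (2*l-1) = (2/π) ^ (2*l-1) * θ ^ (2*l-1) :=
        Real.mul_rpow (by positivity) h0'.le
    -- (2/π)^(2l-1) = (π/2)^(1-2l)
      have h4 : (2/π : ℝ) ^ (2*l-1) = (π/2) ^ (1-2*l) := by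
        rw [show (2/π : ℝ) = (π/2)⁻¹ by rw [inv_div],
          Real.inv_rpow (by positivity), show (1-2*l : ℝ) = -(2*l-1) by ring,
          Real.rpow_neg (by positivity)]
      calc Real.sin θ ^ (2*l-1) ≤ (π/2) ^ (1-2*l) * θ ^ (2*l-1) := by
            rw [← h4]; rw [← h3]; exact h2
      _ ≤ (1 + (π/2)^(1-2*l)) * θ ^ (2*l-1) := by
            apply mul_le_mul_of_nonneg_right _ (Real.rpow_nonneg h0 _)
            linarith [Real.rpow_nonneg (show (0:ℝ) ≤ π/2 by positivity) (1-2*l)]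

lemma A_ge {x y θ : ℝ} (hx : 0 < x) (hy : 0 < y) (h0 : 0 ≤ θ) (hpi : θ ≤ π) :
    x*y/3*θ^2 ≤ 2*x*y*(1 - Real.cos θ) := by
  have h := Real.cos_le_one_sub_mul_cos_sq (by rwa [abs_of_nonneg h0])
  have hpi2 : π^2 < 12 := by nlinarith [Real.pi_lt_d2, Real.pi_pos]
  have hππ : (0:ℝ) < π^2 := by positivity
  have hxyθ : 0 ≤ x*y*θ^2 := by positivity
  have key : x*y/3*θ^2 * π^2 ≤ 4*(x*y*θ^2) := by nlinarith
  have h1 : x*y/3*θ^2 ≤ 2*x*y*(2/π^2*θ^2) := by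
    rw [show 2*x*y*(2/π^2*θ^2) = 4*(x*y*θ^2)/π^2 by ring]
    rw [le_div_iff₀ hππ]
    exact key
  have h2 : 2*x*y*(2/π^2*θ^2) ≤ 2*x*y*(1 - Real.cos θ) := by
    apply mul_le_mul_of_nonneg_left _ (by positivity : (0:ℝ) ≤ 2*x*y)
    linarith
  linarith

noncomputable def Bsin (l : ℝ) : ℝ := ∫ θ in (0:ℝ)..π, Real.sin θ ^ (2*l-1)

lemma Bsin_nonneg (l : ℝ) : 0 ≤ Bsin l := by
  apply intervalIntegral.integral_nonneg Real.pi_pos.le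
  intro u hu
  exact Real.rpow_nonneg (Real.sin_nonneg_of_nonneg_of_le_pi hu.1 hu.2) _

set_option maxHeartbeats 1000000 in
lemma main_int (l x y t : ℝ) (hl : 0 < l) (hx : 0 < x) (hy : 0 < y) (ht : 0 < t) :
    (x*y)^l * (∫ θ in (0:ℝ)..π, Real.sin θ ^ (2*l-1) /
        ((x-y)^2 + t^2 + 2*x*y*(1 - Real.cos θ)) ^ (l+1))
      ≤ (2 * Bsin l + (1 + (π/2)^(1-2*l)) * 3 ^ l * (1/(2*l) + 1/2)) / ((x-y)^2 + t^2) := by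
  have hπ : (0:ℝ) < π := Real.pi_pos
  have hp' : (-1:ℝ) < 2*l-1 := by linarith
  have hxy : 0 < x*y := mul_pos hx hy
  set D := (x-y)^2 + t^2 with hDdef
  have hD : 0 < D := by positivity
  set Ml := 1 + (π/2)^(1-2*l) with hMldef
  have hMl : (1:ℝ) ≤ Ml := le_add_of_nonneg_right (Real.rpow_nonneg (by positivity) _)
  have hMl0 : 0 < Ml := by linarith
  set G := fun θ => Real.sin θ ^ (2*l-1) / (D + 2*x*y*(1 - Real.cos θ)) ^ (l+1) with hGdef
  have hApos : ∀ θ : ℝ, 0 < D + 2*x*y*(1 - Real.cos θ) := by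
    intro θ; have := Real.cos_le_one θ; nlinarith
  have hAgeD : ∀ θ : ℝ, D ≤ D + 2*x*y*(1 - Real.cos θ) := by
    intro θ; have := Real.cos_le_one θ; nlinarith
  have hDl : 0 < D ^ (l+1) := Real.rpow_pos_of_pos hD _
  have hDl0 : 0 < D ^ l := Real.rpow_pos_of_pos hD _
  have hDl1 : D ^ (l+1) = D ^ l * D := Real.rpow_add_one hD.ne' l
  have hBnn : 0 ≤ Bsin l := Bsin_nonneg l
  have hIsin : IntervalIntegrable (fun θ => Real.sin θ ^ (2*l-1)) volume 0 π :=
    sin_rpow_integrable hp'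
  -- integrability of G
  have hGnn : ∀ θ ∈ Icc (0:ℝ) π, 0 ≤ G θ := by
    intro θ hθ
    have := Real.sin_nonneg_of_nonneg_of_le_pi hθ.1 hθ.2
    have := (hApos θ).le
    positivity
  have hGleD : ∀ θ ∈ Icc (0:ℝ) π, G θ ≤ Real.sin θ ^ (2*l-1) / D ^ (l+1) := by
    intro θ hθ
    have hs : 0 ≤ Real.sin θ := Real.sin_nonneg_of_nonneg_of_le_pi hθ.1 hθ.2
    apply div_le_div_of_nonneg_left (Real.rpow_nonneg hs _) hDl
    exact Real.rpow_le_rpow hD.le (hAgeD θ) (by linarith)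
  have hIG : IntervalIntegrable G volume 0 π := by
    apply (hIsin.div_const (D ^ (l+1))).mono_fun'
    · apply Measurable.aestronglyMeasurable
      fun_prop
    · rw [Filter.EventuallyLE, ae_restrict_iff' measurableSet_uIoc]
      filter_upwards with θ hθ
      rw [Set.uIoc_of_le hπ.le] at hθ
      have hmem : θ ∈ Icc (0:ℝ) π := ⟨hθ.1.le, hθ.2⟩
      rw [Real.norm_eq_abs, abs_of_nonneg (hGnn θ hmem)]
      exact hGleD θ hmem
  rcases le_or_gt (2*(x*y)) D with hcase | hcase
  · -- Case 1 : 2xy ≤ D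
    have h1 : (∫ θ in (0:ℝ)..π, G θ) ≤ Bsin l / D ^ (l+1) := by
      have := intervalIntegral.integral_mono_on hπ.le hIG (hIsin.div_const (D^(l+1))) hGleD
      rwa [intervalIntegral.integral_div] at this
    have h2 : (x*y)^l ≤ D^l := Real.rpow_le_rpow hxy.le (by linarith) hl.le
    have h3 : (x*y)^l * (∫ θ in (0:ℝ)..π, G θ) ≤ D^l * (Bsin l / D^(l+1)) := by
      apply mul_le_mul h2 h1 _ hDl0.le
      apply intervalIntegral.integral_nonneg hπ.le hGnn
    have h4 : D^l * (Bsin l / D^(l+1)) = Bsin l / D := by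
      rw [hDl1]; field_simp
    rw [h4] at h3
    apply h3.trans
    rw [div_le_div_iff₀ hD hD]
    have hnn : 0 ≤ Ml * 3^l * (1/(2*l) + 1/2) := by positivity
    nlinarith [mul_pos hD hD, mul_le_mul_of_nonneg_right hnn hD.le]
  · -- Case 2 : D < 2xy
    have hz : 0 < 3*D/(x*y) := by positivity
    set c := Real.sqrt (3*D/(x*y)) with hcdef
    have hc0 : 0 < c := Real.sqrt_pos.2 hz
    have hc2 : c ^ (2:ℝ) = 3*D/(x*y) := by
      rw [show (2:ℝ) = ((2:ℕ):ℝ) by norm_num, Real.rpow_natCast, Real.sq_sqrt hz.le]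
    have hcpow : c ^ (2*l) = (3*D/(x*y)) ^ l := by
      rw [show (2*l : ℝ) = 2*l by ring, Real.rpow_mul (Real.sqrt_nonneg _), hc2]
    have hcneg : c ^ (-2:ℝ) = x*y/(3*D) := by
      rw [show (-2:ℝ) = -(2:ℝ) by norm_num, Real.rpow_neg (Real.sqrt_nonneg _), hc2, inv_div]
    set m := min c (π/2) with hmdef
    have hm0 : 0 ≤ m := le_min hc0.le (by positivity)
    have hmpi2 : m ≤ π/2 := min_le_right _ _
    have hmc : m ≤ c := min_le_left _ _
    have hpi2pi : π/2 ≤ π := by linarith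
    have hsub1 : Set.uIcc (0:ℝ) m ⊆ Set.uIcc (0:ℝ) π := by
      rw [Set.uIcc_of_le hm0, Set.uIcc_of_le hπ.le]
      exact Set.Icc_subset_Icc le_rfl (by linarith)
    have hsub2 : Set.uIcc m (π/2) ⊆ Set.uIcc (0:ℝ) π := by
      rw [Set.uIcc_of_le hmpi2, Set.uIcc_of_le hπ.le]
      exact Set.Icc_subset_Icc hm0 hpi2pi
    have hsub3 : Set.uIcc (π/2:ℝ) π ⊆ Set.uIcc (0:ℝ) π := by
      rw [Set.uIcc_of_le hpi2pi, Set.uIcc_of_le hπ.le]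
      exact Set.Icc_subset_Icc (by positivity) le_rfl
    have hsub4 : Set.uIcc (0:ℝ) (π/2) ⊆ Set.uIcc (0:ℝ) π := by
      rw [Set.uIcc_of_le (by positivity : (0:ℝ) ≤ π/2), Set.uIcc_of_le hπ.le]
      exact Set.Icc_subset_Icc le_rfl hpi2pi
    have e1 := intervalIntegral.integral_add_adjacent_intervals
      (hIG.mono_set hsub4) (hIG.mono_set hsub3)
    have e2 := intervalIntegral.integral_add_adjacent_intervals
      (hIG.mono_set hsub1) (hIG.mono_set hsub2)
    have hsplit : (∫ θ in (0:ℝ)..π, G θ) = (∫ θ in (0:ℝ)..m, G θ)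
        + (∫ θ in m..(π/2:ℝ), G θ) + (∫ θ in (π/2:ℝ)..π, G θ) := by
      rw [← e1, ← e2]
    -- C3 : the piece on [π/2, π]
    have hptw3 : ∀ θ ∈ Icc (π/2:ℝ) π, G θ ≤ Real.sin θ ^ (2*l-1) / (D * (2*(x*y))^l) := by
      intro θ hθ
      have hs : 0 ≤ Real.sin θ :=
        Real.sin_nonneg_of_nonneg_of_le_pi (le_trans (by positivity) hθ.1) hθ.2
      have hcosθ : Real.cos θ ≤ 0 :=
        Real.cos_nonpos_of_pi_div_two_le_of_le hθ.1 (by linarith [hθ.2])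
      have hA2 : D + 2*(x*y) ≤ D + 2*x*y*(1 - Real.cos θ) := by nlinarith
      have h5 : D * (2*(x*y))^l ≤ (D + 2*x*y*(1 - Real.cos θ))^(l+1) := by
        calc D * (2*(x*y))^l ≤ (D + 2*(x*y))^(l+1) := add_rpow_ge hD (by positivity) hl.le
        _ ≤ _ := Real.rpow_le_rpow (by positivity) hA2 (by linarith)
      exact div_le_div₀ (Real.rpow_nonneg hs _) le_rfl (by positivity) h5
    have hsin3 : (∫ θ in (π/2:ℝ)..π, Real.sin θ ^ (2*l-1)) ≤ Bsin l := by
      have e := intervalIntegral.integral_add_adjacent_intervals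
        (hIsin.mono_set hsub4) (hIsin.mono_set hsub3)
      have nn : 0 ≤ ∫ θ in (0:ℝ)..(π/2), Real.sin θ ^ (2*l-1) := by
        apply intervalIntegral.integral_nonneg (by positivity)
        intro u hu
        exact Real.rpow_nonneg
          (Real.sin_nonneg_of_nonneg_of_le_pi hu.1 (le_trans hu.2 hpi2pi)) _
      have hBeq : Bsin l = ∫ θ in (0:ℝ)..π, Real.sin θ ^ (2*l-1) := rfl
      rw [hBeq, ← e]
      linarith
    have h2xyl : 0 < (2*(x*y))^l := Real.rpow_pos_of_pos (by linarith) l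
    have hC3 : (x*y)^l * (∫ θ in (π/2:ℝ)..π, G θ) ≤ Bsin l / D := by
      have h6 : (∫ θ in (π/2:ℝ)..π, G θ) ≤ Bsin l / (D * (2*(x*y))^l) := by
        have hmono := intervalIntegral.integral_mono_on hpi2pi (hIG.mono_set hsub3)
          ((hIsin.mono_set hsub3).div_const (D * (2*(x*y))^l)) hptw3
        rw [intervalIntegral.integral_div] at hmono
        apply hmono.trans
        exact (div_le_div_iff_of_pos_right (by positivity)).mpr hsin3
      have e : (2*(x*y))^l * (Bsin l / (D * (2*(x*y))^l)) = Bsin l / D := by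
        field_simp
      calc (x*y)^l * (∫ θ in (π/2:ℝ)..π, G θ)
          ≤ (x*y)^l * (Bsin l / (D * (2*(x*y))^l)) :=
            mul_le_mul_of_nonneg_left h6 (Real.rpow_nonneg hxy.le l)
      _ ≤ (2*(x*y))^l * (Bsin l / (D * (2*(x*y))^l)) :=
            mul_le_mul_of_nonneg_right
              (Real.rpow_le_rpow hxy.le (by linarith) hl.le) (by positivity)
      _ = Bsin l / D := e
    -- C1 : the piece on [0, m]
    have hintb1 : IntervalIntegrable (fun θ : ℝ => Ml/D^(l+1) * θ^(2*l-1)) volume 0 m :=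
      (intervalIntegral.intervalIntegrable_rpow' hp').const_mul _
    have hptw1 : ∀ θ ∈ Icc (0:ℝ) m, G θ ≤ Ml/D^(l+1) * θ^(2*l-1) := by
      intro θ hθ
      have hθpi : θ ≤ π/2 := le_trans hθ.2 hmpi2
      have h7 : Real.sin θ^(2*l-1) ≤ Ml * θ^(2*l-1) := sin_rpow_le hl hθ.1 hθpi
      have h8 : D^(l+1) ≤ (D + 2*x*y*(1 - Real.cos θ))^(l+1) :=
        Real.rpow_le_rpow hD.le (hAgeD θ) (by linarith)
      have h7' : 0 ≤ Ml * θ^(2*l-1) := by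
        have := Real.rpow_nonneg hθ.1 (2*l-1); positivity
      calc G θ ≤ (Ml * θ^(2*l-1)) / D^(l+1) := div_le_div₀ h7' h7 hDl h8
      _ = Ml/D^(l+1) * θ^(2*l-1) := by ring
    have hval1 : (∫ θ in (0:ℝ)..m, Ml/D^(l+1) * θ^(2*l-1))
        = Ml/D^(l+1) * (m^(2*l)/(2*l)) := by
      rw [intervalIntegral.integral_const_mul, integral_rpow (Or.inl hp')]
      rw [show 2*l-1+1 = 2*l by ring, Real.zero_rpow (by linarith : 2*l ≠ 0)]
      ring
    have hC1 : (x*y)^l * (∫ θ in (0:ℝ)..m, G θ) ≤ Ml * 3^l * (1/(2*l)) / D := by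
      have h9 : (∫ θ in (0:ℝ)..m, G θ) ≤ Ml/D^(l+1) * (m^(2*l)/(2*l)) := by
        rw [← hval1]
        exact intervalIntegral.integral_mono_on hm0 (hIG.mono_set hsub1) hintb1 hptw1
      have h10 : m^(2*l) ≤ (3*D/(x*y))^l := by
        rw [← hcpow]
        exact Real.rpow_le_rpow hm0 hmc (by linarith)
      have E1 : (x*y)^l * (3*D/(x*y))^l = 3^l * D^l := by
        rw [← Real.mul_rpow hxy.le hz.le,
          show x*y*(3*D/(x*y)) = 3*D by field_simp]
        exact Real.mul_rpow (by norm_num) hD.le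
      have h11 : Ml/D^(l+1) * (m^(2*l)/(2*l)) ≤ Ml/D^(l+1) * ((3*D/(x*y))^l/(2*l)) := by
        apply mul_le_mul_of_nonneg_left _ (by positivity)
        exact (div_le_div_iff_of_pos_right (by linarith : (0:ℝ) < 2*l)).mpr h10
      calc (x*y)^l * (∫ θ in (0:ℝ)..m, G θ)
          ≤ (x*y)^l * (Ml/D^(l+1) * (m^(2*l)/(2*l))) :=
            mul_le_mul_of_nonneg_left h9 (Real.rpow_nonneg hxy.le l)
      _ ≤ (x*y)^l * (Ml/D^(l+1) * ((3*D/(x*y))^l/(2*l))) :=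
            mul_le_mul_of_nonneg_left h11 (Real.rpow_nonneg hxy.le l)
      _ = Ml * ((x*y)^l * (3*D/(x*y))^l) / (D^(l+1) * (2*l)) := by ring
      _ = Ml * (3^l * D^l) / (D^(l+1) * (2*l)) := by rw [E1]
      _ = Ml * 3^l * (1/(2*l)) / D := by
            rw [hDl1]; field_simp
    -- C2 : the piece on [m, π/2]
    have hC2 : (x*y)^l * (∫ θ in m..(π/2:ℝ), G θ) ≤ Ml * 3^l * (1/2) / D := by
      rcases le_or_gt c (π/2) with hcle | hcgt
      · have hmeq : m = c := min_eq_left hcle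
        have hm0' : 0 < m := hmeq ▸ hc0
        have hnotmem : (0:ℝ) ∉ Set.uIcc m (π/2) := by
          rw [Set.uIcc_of_le hmpi2]
          rintro ⟨h0m, -⟩
          exact absurd h0m (not_le.2 hm0')
        have hint2 : IntervalIntegrable (fun θ:ℝ => Ml * (3/(x*y))^(l+1) * θ^(-3:ℝ))
            volume m (π/2) := by
          apply IntervalIntegrable.const_mul
          exact intervalIntegral.intervalIntegrable_rpow (Or.inr hnotmem)
        have hptw2 : ∀ θ ∈ Icc m (π/2:ℝ), G θ ≤ Ml * (3/(x*y))^(l+1) * θ^(-3:ℝ) := by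
          intro θ hθ
          have hθ0 : 0 < θ := lt_of_lt_of_le hm0' hθ.1
          have h7 : Real.sin θ^(2*l-1) ≤ Ml * θ^(2*l-1) := sin_rpow_le hl hθ0.le hθ.2
          have hA3 : x*y/3*θ^2 ≤ D + 2*x*y*(1 - Real.cos θ) := by
            have := A_ge hx hy hθ0.le (by linarith [hθ.2])
            linarith
          have h8 : (x*y/3*θ^2)^(l+1) ≤ (D + 2*x*y*(1 - Real.cos θ))^(l+1) :=
            Real.rpow_le_rpow (by positivity) hA3 (by linarith)
          have h7' : 0 ≤ Ml * θ^(2*l-1) := by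
            have := Real.rpow_nonneg hθ0.le (2*l-1); positivity
          have h9 : G θ ≤ Ml*θ^(2*l-1)/(x*y/3*θ^2)^(l+1) :=
            div_le_div₀ h7' h7 (Real.rpow_pos_of_pos (by positivity) _) h8
          apply h9.trans_eq
          have ea : (x*y/3*θ^2)^(l+1) = (x*y/3)^(l+1) * θ^(2*(l+1)) := by
            rw [Real.mul_rpow (by positivity) (by positivity)]
            congr 1
            rw [← Real.rpow_natCast θ 2, ← Real.rpow_mul hθ0.le]
            norm_num
          have eb : θ^(2*l-1) = θ^(2*(l+1)) * θ^(-3:ℝ) := by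
            rw [← Real.rpow_add hθ0]
            congr 1
            ring
          have ec : (3/(x*y))^(l+1) = ((x*y/3)^(l+1))⁻¹ := by
            rw [show (3/(x*y) : ℝ) = (x*y/3)⁻¹ by rw [inv_div],
              Real.inv_rpow (by positivity)]
          rw [ea, eb, ec]
          have hne1 : ((x*y/3 : ℝ)^(l+1)) ≠ 0 :=
            (Real.rpow_pos_of_pos (by positivity) _).ne'
          have hne2 : θ^(2*(l+1)) ≠ 0 := (Real.rpow_pos_of_pos hθ0 _).ne'
          field_simp
        have hval2 : (∫ θ in m..(π/2:ℝ), Ml * (3/(x*y))^(l+1) * θ^(-3:ℝ))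
            ≤ Ml * (3/(x*y))^(l+1) * (x*y/(3*D)/2) := by
          rw [intervalIntegral.integral_const_mul,
            integral_rpow (Or.inr ⟨by norm_num, hnotmem⟩)]
          apply mul_le_mul_of_nonneg_left _ (by positivity)
          rw [show (-3:ℝ)+1 = -2 by norm_num]
          have hppos : 0 ≤ (π/2 : ℝ)^(-2:ℝ) := Real.rpow_nonneg (by positivity) _
          have hmval : m^(-2:ℝ) = x*y/(3*D) := by rw [hmeq, hcneg]
          have : ((π/2:ℝ)^(-2:ℝ) - m^(-2:ℝ))/(-2) = (m^(-2:ℝ) - (π/2:ℝ)^(-2:ℝ))/2 := by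
            ring
          rw [this, hmval]
          linarith
        have h12 : (∫ θ in m..(π/2:ℝ), G θ) ≤ Ml * (3/(x*y))^(l+1) * (x*y/(3*D)/2) := by
          apply le_trans _ hval2
          exact intervalIntegral.integral_mono_on hmpi2 (hIG.mono_set hsub2) hint2 hptw2
        have E3 : (x*y)^l * (Ml * (3/(x*y))^(l+1) * (x*y/(3*D)/2)) = Ml * 3^l * (1/2) / D := by
          have e4 : (3/(x*y) : ℝ)^(l+1) = 3^(l+1)/(x*y)^(l+1) :=
            Real.div_rpow (by norm_num : (0:ℝ) ≤ 3) hxy.le (l+1)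
          have e5 : (x*y)^(l+1) = (x*y)^l * (x*y) := Real.rpow_add_one hxy.ne' l
          have e6 : (3:ℝ)^(l+1) = 3^l * 3 := Real.rpow_add_one (by norm_num) l
          have h3l : (0:ℝ) < 3^l := Real.rpow_pos_of_pos (by norm_num) l
          have hxyl : (0:ℝ) < (x*y)^l := Real.rpow_pos_of_pos hxy l
          rw [e4, e5, e6]
          field_simp
        calc (x*y)^l * (∫ θ in m..(π/2:ℝ), G θ)
            ≤ (x*y)^l * (Ml * (3/(x*y))^(l+1) * (x*y/(3*D)/2)) :=
              mul_le_mul_of_nonneg_left h12 (Real.rpow_nonneg hxy.le l)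
        _ = Ml * 3^l * (1/2) / D := E3
      · have hmeq : m = π/2 := min_eq_right hcgt.le
        rw [hmeq, intervalIntegral.integral_same, mul_zero]
        positivity
    -- combine
    rw [hsplit, mul_add, mul_add]
    have hfin : Ml*3^l*(1/(2*l))/D + Ml*3^l*(1/2)/D + Bsin l/D
        ≤ (2*Bsin l + Ml*3^l*(1/(2*l)+1/2))/D := by
      rw [← add_div, ← add_div]
      apply (div_le_div_iff_of_pos_right hD).mpr
      ring_nf
      linarith [hBnn]
    linarith [hC1, hC2, hC3, hfin]

set_option maxHeartbeats 1000000 in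
/-- For `λ > 0`, `|D_{λ,x}P_t^λ(x,y)| ≤ C/((x-y)² + t²)` for all `x,y,t ∈ (0,∞)`. -/
theorem statement1 (l : ℝ) (hl : 0 < l) :
    ∃ C > 0, ∀ x y t : ℝ, 0 < x → 0 < y → 0 < t →
      |DxBesselPoissonKernel l x y t| ≤ C / ((x - y) ^ 2 + t ^ 2) := by
  have hπ : (0:ℝ) < π := Real.pi_pos
  have hp' : (-1:ℝ) < 2*l-1 := by linarith
  set K := 2 * Bsin l + (1 + (π/2)^(1-2*l)) * 3 ^ l * (1/(2*l) + 1/2) with hKdef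
  have hK0 : 0 ≤ K := by
    have h0 := Bsin_nonneg l
    have h1 : (0:ℝ) ≤ (1 + (π/2)^(1-2*l)) * 3 ^ l * (1/(2*l) + 1/2) := by positivity
    rw [hKdef]; linarith
  have hc1 : (0:ℝ) < 4*l*(l+1)/π := by positivity
  have hCnum : (0:ℝ) ≤ 20*l*(l+1)/π * K :=
    mul_nonneg (by positivity) hK0
  refine ⟨20*l*(l+1)/π * K + 1, by linarith, ?_⟩
  intro x y t hx hy ht
  have hxy : 0 < x*y := mul_pos hx hy
  have hD : 0 < (x-y)^2 + t^2 := by positivity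
  have hApos : ∀ θ : ℝ, 0 < (x-y)^2 + t^2 + 2*x*y*(1 - Real.cos θ) := by
    intro θ; have := Real.cos_le_one θ; nlinarith
  set G := fun θ => Real.sin θ ^ (2*l-1) /
      ((x-y)^2 + t^2 + 2*x*y*(1 - Real.cos θ)) ^ (l+1) with hGdef
  set f := fun θ => Real.sin θ ^ (2*l-1) * (x - y * Real.cos θ) /
      ((x-y)^2 + t^2 + 2*x*y*(1 - Real.cos θ)) ^ (l+2) with hfdef
  have hIsin : IntervalIntegrable (fun θ => Real.sin θ ^ (2*l-1)) volume 0 π :=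
    sin_rpow_integrable hp'
  have hGnn : ∀ θ ∈ Icc (0:ℝ) π, 0 ≤ G θ := by
    intro θ hθ
    have := Real.sin_nonneg_of_nonneg_of_le_pi hθ.1 hθ.2
    have := (hApos θ).le
    positivity
  have hGleD : ∀ θ ∈ Icc (0:ℝ) π, G θ ≤ Real.sin θ ^ (2*l-1) / ((x-y)^2+t^2) ^ (l+1) := by
    intro θ hθ
    have hs : 0 ≤ Real.sin θ := Real.sin_nonneg_of_nonneg_of_le_pi hθ.1 hθ.2
    apply div_le_div_of_nonneg_left (Real.rpow_nonneg hs _)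
      (Real.rpow_pos_of_pos hD _)
    apply Real.rpow_le_rpow hD.le _ (by linarith)
    nlinarith [Real.cos_le_one θ]
  have hIG : IntervalIntegrable G volume 0 π := by
    apply (hIsin.div_const (((x-y)^2+t^2) ^ (l+1))).mono_fun'
    · apply Measurable.aestronglyMeasurable
      fun_prop
    · rw [Filter.EventuallyLE, ae_restrict_iff' measurableSet_uIoc]
      filter_upwards with θ hθ
      rw [Set.uIoc_of_le hπ.le] at hθ
      have hmem : θ ∈ Icc (0:ℝ) π := ⟨hθ.1.le, hθ.2⟩
      rw [Real.norm_eq_abs, abs_of_nonneg (hGnn θ hmem)]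
      exact hGleD θ hmem
  -- pointwise bound |f| ≤ (5/t) G
  have hptw : ∀ θ ∈ Icc (0:ℝ) π, |f θ| ≤ 5/t * G θ := by
    intro θ hθ
    have hs : 0 ≤ Real.sin θ := Real.sin_nonneg_of_nonneg_of_le_pi hθ.1 hθ.2
    have hsp : 0 ≤ Real.sin θ ^ (2*l-1) := Real.rpow_nonneg hs _
    set A := (x-y)^2 + t^2 + 2*x*y*(1 - Real.cos θ) with hAdef
    have hA : 0 < A := hApos θ
    have hAl2 : 0 < A ^ (l+2) := Real.rpow_pos_of_pos hA _
    have hAl1 : 0 < A ^ (l+1) := Real.rpow_pos_of_pos hA _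
    have hb : t * |x - y * Real.cos θ| ≤ 5 * A :=
      abs_bound hx hy ht (Real.neg_one_le_cos θ) (Real.cos_le_one θ)
    have hb' : |x - y * Real.cos θ| ≤ 5 * A / t := by
      rw [le_div_iff₀ ht]; linarith
    have hsplit2 : A ^ (l+2) = A ^ (l+1) * A := by
      rw [show (l+2 : ℝ) = (l+1)+1 by ring]
      exact Real.rpow_add_one hA.ne' (l+1)
    have e0 : |f θ| = Real.sin θ ^ (2*l-1) * |x - y * Real.cos θ| / A ^ (l+2) := by
      rw [hfdef]
      rw [abs_div, abs_mul, abs_of_nonneg hsp, abs_of_pos hAl2]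
    rw [e0]
    calc Real.sin θ ^ (2*l-1) * |x - y * Real.cos θ| / A ^ (l+2)
        ≤ Real.sin θ ^ (2*l-1) * (5 * A / t) / A ^ (l+2) := by
          apply (div_le_div_iff_of_pos_right hAl2).mpr
          exact mul_le_mul_of_nonneg_left hb' hsp
    _ = 5/t * (Real.sin θ ^ (2*l-1) / A ^ (l+1)) := by
          rw [hsplit2]
          field_simp
  have hIf : IntervalIntegrable (fun θ => |f θ|) volume 0 π := by
    apply (hIG.const_mul (5/t)).mono_fun'
    · apply Measurable.aestronglyMeasurable
      fun_prop
    · rw [Filter.EventuallyLE, ae_restrict_iff' measurableSet_uIoc]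
      filter_upwards with θ hθ
      rw [Set.uIoc_of_le hπ.le] at hθ
      have hmem : θ ∈ Icc (0:ℝ) π := ⟨hθ.1.le, hθ.2⟩
      rw [Real.norm_eq_abs, abs_abs]
      exact hptw θ hmem
  have hint1 : |∫ θ in (0:ℝ)..π, f θ| ≤ ∫ θ in (0:ℝ)..π, |f θ| :=
    intervalIntegral.abs_integral_le_integral_abs hπ.le
  have hint2 : (∫ θ in (0:ℝ)..π, |f θ|) ≤ 5/t * ∫ θ in (0:ℝ)..π, G θ := by
    rw [← intervalIntegral.integral_const_mul]
    exact intervalIntegral.integral_mono_on hπ.le hIf (hIG.const_mul _) hptw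
  have hGint_nn : 0 ≤ ∫ θ in (0:ℝ)..π, G θ :=
    intervalIntegral.integral_nonneg hπ.le hGnn
  have hmain := main_int l x y t hl hx hy ht
  have habs : |DxBesselPoissonKernel l x y t|
      = 4*l*(l+1)/π * (x*y)^l * t * |∫ θ in (0:ℝ)..π, f θ| := by
    simp only [DxBesselPoissonKernel, hfdef]
    rw [abs_mul, abs_mul, abs_mul, abs_neg,
      abs_of_pos hc1, abs_of_pos (Real.rpow_pos_of_pos hxy l), abs_of_pos ht]
  rw [habs]
  have step1 : 4*l*(l+1)/π * (x*y)^l * t * |∫ θ in (0:ℝ)..π, f θ|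
      ≤ 4*l*(l+1)/π * (x*y)^l * t * (5/t * ∫ θ in (0:ℝ)..π, G θ) := by
    apply mul_le_mul_of_nonneg_left (hint1.trans hint2)
    positivity
  have step2 : 4*l*(l+1)/π * (x*y)^l * t * (5/t * ∫ θ in (0:ℝ)..π, G θ)
      = 20*l*(l+1)/π * ((x*y)^l * ∫ θ in (0:ℝ)..π, G θ) := by
    field_simp
    ring
  have step3 : 20*l*(l+1)/π * ((x*y)^l * ∫ θ in (0:ℝ)..π, G θ)
      ≤ 20*l*(l+1)/π * (K / ((x-y)^2+t^2)) := by
    apply mul_le_mul_of_nonneg_left _ (by positivity)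
    exact hmain
  have step4 : 20*l*(l+1)/π * (K / ((x-y)^2+t^2))
      ≤ (20*l*(l+1)/π * K + 1) / ((x-y)^2+t^2) := by
    rw [mul_div_assoc'] at *
    apply (div_le_div_iff_of_pos_right hD).mpr
    linarith
  linarith [step1, step2.le, step2.ge, step3, step4]
end

section
/- Let λ > 1. If v is bounded and continuous on (0,∞) × [0,∞), λ-harmonic on (0,∞) × (0,∞), and v(x,0) = 0 for all x ∈ (0,∞), then v ≡ 0 on (0,∞) × [0,∞). -/
open MeasureTheory Real Set

open Filter Topology

/-- Second derivative test: at an interior local max, the second derivative is ≤ 0. -/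
theorem secondDerivTest {f : ℝ → ℝ} {a c : ℝ}
    (hd : ∀ᶠ x in 𝓝 a, DifferentiableAt ℝ f x)
    (h2 : HasDerivAt (deriv f) c a) (hmax : IsLocalMax f a) : c ≤ 0 := by
  by_contra hc
  push_neg at hc
  have h0 : deriv f a = 0 := hmax.deriv_eq_zero
  have hslope : Tendsto (slope (deriv f) a) (𝓝[≠] a) (𝓝 c) :=
    hasDerivAt_iff_tendsto_slope.1 h2
  have hev : ∀ᶠ x in 𝓝[≠] a, 0 < slope (deriv f) a x :=
    hslope.eventually (eventually_gt_nhds hc)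
  have hev' : ∀ᶠ x in 𝓝[>] a, 0 < deriv f x := by
    have h1 : ∀ᶠ x in 𝓝[>] a, 0 < slope (deriv f) a x :=
      hev.filter_mono (nhdsWithin_mono a fun x hx => ne_of_gt hx)
    filter_upwards [h1, self_mem_nhdsWithin] with x hx hxa
    have hxa' : (0:ℝ) < x - a := sub_pos.2 hxa
    have hs : slope (deriv f) a x = deriv f x / (x - a) := by
      rw [slope_def_field, h0]; ring
    rw [hs] at hx
    have := (div_pos_iff.1 hx)
    rcases this with h | h
    · exact h.1
    · exact absurd h.2 (not_lt.2 hxa'.le)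
  obtain ⟨δ, hδ, hball⟩ := Metric.eventually_nhds_iff_ball.1 (hd.and hmax)
  obtain ⟨U, hUopen, hUa, hU⟩ := mem_nhdsWithin.1 hev'
  obtain ⟨δ', hδ', hball'⟩ := Metric.isOpen_iff.1 hUopen a hUa
  obtain ⟨r, hr0, hrδ, hrδ'⟩ : ∃ r : ℝ, 0 < r ∧ r < δ ∧ r < δ' :=
    ⟨min δ δ' / 2, by positivity, by
      have := min_le_left δ δ'; linarith [lt_min hδ hδ'], by
      have := min_le_right δ δ'; linarith [lt_min hδ hδ']⟩
  have hab : a < a + r := by linarith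
  have hmono : StrictMonoOn f (Icc a (a + r)) := by
    apply strictMonoOn_of_deriv_pos (convex_Icc a (a + r))
    · intro x hx
      have hxb : dist x a < δ := by
        rw [Real.dist_eq, abs_sub_lt_iff]
        exact ⟨by linarith [hx.2], by linarith [hx.1]⟩
      exact ((hball x (Metric.mem_ball.2 hxb)).1).continuousAt.continuousWithinAt
    · intro x hx
      rw [interior_Icc] at hx
      apply hU
      refine ⟨hball' ?_, hx.1⟩
      rw [Metric.mem_ball, Real.dist_eq, abs_sub_lt_iff]
      exact ⟨by linarith [hx.2], by linarith [hx.1]⟩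
  have hfb : f a < f (a + r) :=
    hmono (left_mem_Icc.2 hab.le) (right_mem_Icc.2 hab.le) hab
  have hble : f (a + r) ≤ f a := by
    refine (hball (a + r) ?_).2
    rw [Metric.mem_ball, Real.dist_eq, abs_sub_lt_iff]
    exact ⟨by linarith, by linarith⟩
  linarith

theorem diffAt_of_contDiffOn2 {f : ℝ → ℝ} {x : ℝ}
    (h : ContDiffOn ℝ 2 f (Ioi 0)) (hx : 0 < x) : DifferentiableAt ℝ f x :=
  ((h.differentiableOn (by norm_num)).differentiableAt (isOpen_Ioi.mem_nhds hx))

theorem derivDiffAt_of_contDiffOn2 {f : ℝ → ℝ} {x : ℝ}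
    (h : ContDiffOn ℝ 2 f (Ioi 0)) (hx : 0 < x) :
    DifferentiableAt ℝ (deriv f) x := by
  have hU : UniqueDiffOn ℝ (Ioi (0:ℝ)) := isOpen_Ioi.uniqueDiffOn
  have h1 : ContDiffOn ℝ 1 (derivWithin f (Ioi 0)) (Ioi 0) :=
    h.derivWithin hU (by norm_num)
  have h2 : DifferentiableAt ℝ (derivWithin f (Ioi 0)) x :=
    (h1.differentiableOn (by norm_num)).differentiableAt (isOpen_Ioi.mem_nhds hx)
  have h3 : derivWithin f (Ioi 0) =ᶠ[𝓝 x] deriv f := by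
    filter_upwards [isOpen_Ioi.mem_nhds hx] with y hy using derivWithin_of_isOpen isOpen_Ioi hy
  exact (h3.differentiableAt_iff).1 h2

theorem key_le (l ε : ℝ) (hl : 1 < l) (hε : 0 < ε) (v : ℝ × ℝ → ℝ) (M : ℝ)
    (hbdd : ∀ p ∈ Ioi (0:ℝ) ×ˢ Ici (0:ℝ), |v p| ≤ M)
    (hcont : ContinuousOn v (Ioi (0:ℝ) ×ˢ Ici (0:ℝ)))
    (hreg : ContDiffOn ℝ 2 v (Ioi (0:ℝ) ×ˢ Ioi (0:ℝ)))
    (hpde : ∀ x t : ℝ, 0 < x → 0 < t →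
      deriv (deriv (fun s => v (x, s))) t + deriv (deriv (fun z => v (z, t))) x
        - l * (l - 1) / x ^ 2 * v (x, t) = 0)
    (h0 : ∀ x : ℝ, 0 < x → v (x, 0) = 0)
    (x₀ t₀ : ℝ) (hx₀ : 0 < x₀) (ht₀ : 0 ≤ t₀) :
    v (x₀, t₀) ≤ ε * (x₀ ^ l + x₀ ^ (1 - l) + t₀) := by
  have hM : 0 ≤ M := le_trans (abs_nonneg _)
    (hbdd (1, 0) ⟨by norm_num, le_refl (0:ℝ)⟩)
  have hl0 : (0:ℝ) < l := by linarith
  have hl1 : (0:ℝ) < l - 1 := by linarith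
  have hM1 : (0:ℝ) < M + 1 := by linarith
  have hc0 : (0:ℝ) < ε / (M + 1) := by positivity
  set a : ℝ := min (x₀ / 2) ((ε / (M + 1)) ^ (1 / (l - 1))) with ha_def
  set A : ℝ := max (2 * x₀) (((M + 1) / ε) ^ (1 / l)) with hA_def
  set T : ℝ := max (t₀ + 1) ((M + 1) / ε) with hT_def
  have ha : 0 < a := lt_min (by linarith) (rpow_pos_of_pos hc0 _)
  have hax : a ≤ x₀ := le_trans (min_le_left _ _) (by linarith)
  have hxA : x₀ ≤ A := le_trans (by linarith) (le_max_left _ _)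
  have htT : t₀ ≤ T := le_trans (by linarith) (le_max_left _ _)
  -- boundary bounds
  have hba : M + 1 ≤ ε * a ^ (1 - l) := by
    have h1 : a ≤ (ε / (M + 1)) ^ (1 / (l - 1)) := min_le_right _ _
    have h2 : ((ε / (M + 1)) ^ (1 / (l - 1))) ^ (1 - l) ≤ a ^ (1 - l) :=
      Real.rpow_le_rpow_of_nonpos ha h1 (by linarith)
    have h3 : ((ε / (M + 1)) ^ (1 / (l - 1))) ^ (1 - l) = (M + 1) / ε := by
      rw [← Real.rpow_mul hc0.le,
        show (1 / (l - 1)) * (1 - l) = -1 by field_simp; ring,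
        Real.rpow_neg_one, inv_div]
    calc M + 1 = ε * ((M + 1) / ε) := by field_simp
      _ ≤ ε * a ^ (1 - l) := by
          apply mul_le_mul_of_nonneg_left _ hε.le
          rw [← h3]; exact h2
  have hbA : M + 1 ≤ ε * A ^ l := by
    have h1 : ((M + 1) / ε) ^ (1 / l) ≤ A := le_max_right _ _
    have h2 : (((M + 1) / ε) ^ (1 / l)) ^ l ≤ A ^ l :=
      Real.rpow_le_rpow (rpow_nonneg (by positivity) _) h1 hl0.le
    have h3 : (((M + 1) / ε) ^ (1 / l)) ^ l = (M + 1) / ε := by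
      rw [← Real.rpow_mul (by positivity), one_div_mul_cancel hl0.ne', Real.rpow_one]
    calc M + 1 = ε * ((M + 1) / ε) := by field_simp
      _ ≤ ε * A ^ l := by
          apply mul_le_mul_of_nonneg_left _ hε.le
          rw [← h3]; exact h2
  have hbT : M + 1 ≤ ε * T :=
    calc M + 1 = ε * ((M + 1) / ε) := by field_simp
      _ ≤ ε * T := mul_le_mul_of_nonneg_left (le_max_right _ _) hε.le
  -- the rectangle and the max of u
  have hKsub : Icc a A ×ˢ Icc (0:ℝ) T ⊆ Ioi (0:ℝ) ×ˢ Ici (0:ℝ) :=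
    fun p hp => ⟨lt_of_lt_of_le ha hp.1.1, hp.2.1⟩
  set u : ℝ × ℝ → ℝ := fun p => v p - ε * (p.1 ^ l + p.1 ^ (1 - l) + p.2) with hu
  have hu_cont : ContinuousOn u (Icc a A ×ˢ Icc (0:ℝ) T) := by
    apply ContinuousOn.sub (hcont.mono hKsub)
    apply ContinuousOn.mul continuousOn_const
    apply ContinuousOn.add (ContinuousOn.add ?_ ?_) (continuous_snd.continuousOn)
    · exact (continuous_fst.continuousOn).rpow_const
        fun p hp => Or.inl (ne_of_gt (lt_of_lt_of_le ha hp.1.1))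
    · exact (continuous_fst.continuousOn).rpow_const
        fun p hp => Or.inl (ne_of_gt (lt_of_lt_of_le ha hp.1.1))
  have hx₀K : (x₀, t₀) ∈ Icc a A ×ˢ Icc (0:ℝ) T := ⟨⟨hax, hxA⟩, ⟨ht₀, htT⟩⟩
  obtain ⟨q, hqK, hq⟩ := (isCompact_Icc.prod isCompact_Icc).exists_isMaxOn
    ⟨(x₀, t₀), hx₀K⟩ hu_cont
  have hq' : ∀ p ∈ Icc a A ×ˢ Icc (0:ℝ) T, u p ≤ u q := fun p hp => hq hp
  suffices hs : u q ≤ 0 by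
    have h1 : u (x₀, t₀) ≤ u q := hq' _ hx₀K
    have h2 : u (x₀, t₀) = v (x₀, t₀) - ε * (x₀ ^ l + x₀ ^ (1 - l) + t₀) := by
      simp only [hu]
    linarith
  by_contra hpos
  push_neg at hpos
  have hq1pos : 0 < q.1 := lt_of_lt_of_le ha hqK.1.1
  have hvq : v q ≤ M := le_trans (le_abs_self _) (hbdd q (hKsub hqK))
  have hql : 0 < q.1 ^ l := rpow_pos_of_pos hq1pos l
  have hq1l : 0 < q.1 ^ (1 - l) := rpow_pos_of_pos hq1pos (1 - l)
  have hq2 : 0 ≤ q.2 := hqK.2.1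
  have huq : u q = v q - (ε * q.1 ^ l + ε * q.1 ^ (1 - l) + ε * q.2) := by
    simp only [hu]; ring
  rw [huq] at hpos
  have hεl := mul_pos hε hql
  have hε1l := mul_pos hε hq1l
  have hε2 := mul_nonneg hε.le hq2
  -- boundary exclusion
  have hq1a : a < q.1 := by
    rcases eq_or_lt_of_le hqK.1.1 with h | h
    · exfalso
      have hb : M + 1 ≤ ε * q.1 ^ (1 - l) := by rw [← h]; exact hba
      linarith
    · exact h
  have hq1A : q.1 < A := by
    rcases eq_or_lt_of_le hqK.1.2 with h | h
    · exfalso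
      have hb : M + 1 ≤ ε * q.1 ^ l := by rw [h]; exact hbA
      linarith
    · exact h
  have hq2T : q.2 < T := by
    rcases eq_or_lt_of_le hqK.2.2 with h | h
    · exfalso
      have hb : M + 1 ≤ ε * q.2 := by rw [h]; exact hbT
      linarith
    · exact h
  have hq20 : 0 < q.2 := by
    rcases eq_or_lt_of_le hq2 with h | h
    · exfalso
      have hv0 : v q = 0 := by
        rw [show q = (q.1, q.2) from rfl, ← h]
        exact h0 q.1 hq1pos
      linarith
    · exact h
  -- interior local max
  have hint : q ∈ Ioo a A ×ˢ Ioo (0:ℝ) T := ⟨⟨hq1a, hq1A⟩, ⟨hq20, hq2T⟩⟩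
  have hlocal : IsLocalMax u q := by
    have hop : IsOpen (Ioo a A ×ˢ Ioo (0:ℝ) T) := isOpen_Ioo.prod isOpen_Ioo
    filter_upwards [hop.mem_nhds hint] with p hp
    exact hq' p ⟨⟨hp.1.1.le, hp.1.2.le⟩, ⟨hp.2.1.le, hp.2.2.le⟩⟩
  have hmax_t : IsLocalMax (fun s => u (q.1, s)) q.2 := by
    have hct : ContinuousAt (fun s : ℝ => ((q.1, s) : ℝ × ℝ)) q.2 :=
      (continuous_const.prodMk continuous_id).continuousAt
    exact hct.tendsto.eventually hlocal
  have hmax_x : IsLocalMax (fun z => u (z, q.2)) q.1 := by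
    have hct : ContinuousAt (fun z : ℝ => ((z, q.2) : ℝ × ℝ)) q.1 :=
      (continuous_id.prodMk continuous_const).continuousAt
    exact hct.tendsto.eventually hlocal
  -- slice regularity
  have hreg_t : ContDiffOn ℝ 2 (fun s => v (q.1, s)) (Ioi 0) :=
    hreg.comp ((contDiff_const.prodMk contDiff_id).contDiffOn)
      (fun s hs => mk_mem_prod hq1pos hs)
  have hreg_x : ContDiffOn ℝ 2 (fun z => v (z, q.2)) (Ioi 0) :=
    hreg.comp ((contDiff_id.prodMk contDiff_const).contDiffOn)
      (fun z hz => mk_mem_prod hz hq20)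
  -- time direction second derivative
  have hft_d : DifferentiableAt ℝ (deriv (fun s => v (q.1, s))) q.2 :=
    derivDiffAt_of_contDiffOn2 hreg_t hq20
  have hFt_ev : deriv (fun s => u (q.1, s)) =ᶠ[𝓝 q.2]
      fun s => deriv (fun s' => v (q.1, s')) s - ε := by
    filter_upwards [isOpen_Ioi.mem_nhds hq20] with s hs
    have hd1 : DifferentiableAt ℝ (fun s' => v (q.1, s')) s :=
      diffAt_of_contDiffOn2 hreg_t hs
    have hd2 : HasDerivAt (fun s' : ℝ => ε * (q.1 ^ l + q.1 ^ (1 - l) + s')) ε s := by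
      simpa using ((hasDerivAt_id s).const_add (q.1 ^ l + q.1 ^ (1 - l))).const_mul ε
    have heq : (fun s' => u (q.1, s')) =
        fun s' => v (q.1, s') - ε * (q.1 ^ l + q.1 ^ (1 - l) + s') := by
      funext s'; simp only [hu]
    rw [heq, deriv_fun_sub hd1 hd2.differentiableAt, hd2.deriv]
  have hderiv_t : HasDerivAt (deriv (fun s => u (q.1, s)))
      (deriv (deriv (fun s => v (q.1, s))) q.2) q.2 := by
    have h1 : HasDerivAt (fun s => deriv (fun s' => v (q.1, s')) s - ε)
        (deriv (deriv (fun s => v (q.1, s))) q.2) q.2 := hft_d.hasDerivAt.sub_const ε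
    exact h1.congr_of_eventuallyEq hFt_ev
  have hdiff_ev_t : ∀ᶠ s in 𝓝 q.2, DifferentiableAt ℝ (fun s' => u (q.1, s')) s := by
    filter_upwards [isOpen_Ioi.mem_nhds hq20] with s hs
    have heq : (fun s' => u (q.1, s')) =
        fun s' => v (q.1, s') - ε * (q.1 ^ l + q.1 ^ (1 - l) + s') := by
      funext s'; simp only [hu]
    rw [heq]
    exact (diffAt_of_contDiffOn2 hreg_t hs).sub
      (((hasDerivAt_id s).const_add (q.1 ^ l + q.1 ^ (1 - l))).const_mul ε).differentiableAt
  have hT2 : deriv (deriv (fun s => v (q.1, s))) q.2 ≤ 0 :=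
    secondDerivTest hdiff_ev_t hderiv_t hmax_t
  -- x direction second derivative
  have hfx_d : DifferentiableAt ℝ (deriv (fun z => v (z, q.2))) q.1 :=
    derivDiffAt_of_contDiffOn2 hreg_x hq1pos
  have hψ : ∀ z : ℝ, 0 < z → HasDerivAt (fun y : ℝ => ε * (y ^ l + y ^ (1 - l) + q.2))
      (ε * (l * z ^ (l - 1) + (1 - l) * z ^ (-l))) z := by
    intro z hz
    have hA1 : HasDerivAt (fun y : ℝ => y ^ l) (l * z ^ (l - 1)) z :=
      Real.hasDerivAt_rpow_const (Or.inl hz.ne')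
    have hB1 : HasDerivAt (fun y : ℝ => y ^ (1 - l)) ((1 - l) * z ^ (-l)) z := by
      rw [show -l = 1 - l - 1 by ring]
      exact Real.hasDerivAt_rpow_const (Or.inl hz.ne')
    exact ((hA1.add hB1).add_const q.2).const_mul ε
  have hψ' : HasDerivAt (fun z : ℝ => ε * (l * z ^ (l - 1) + (1 - l) * z ^ (-l)))
      (ε * (l * ((l - 1) * q.1 ^ (l - 2)) + (1 - l) * ((-l) * q.1 ^ (-l - 1)))) q.1 := by
    have hA1 : HasDerivAt (fun y : ℝ => y ^ (l - 1)) ((l - 1) * q.1 ^ (l - 2)) q.1 := by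
      rw [show l - 2 = l - 1 - 1 by ring]
      exact Real.hasDerivAt_rpow_const (Or.inl hq1pos.ne')
    have hB1 : HasDerivAt (fun y : ℝ => y ^ (-l)) ((-l) * q.1 ^ (-l - 1)) q.1 :=
      Real.hasDerivAt_rpow_const (Or.inl hq1pos.ne')
    exact ((hA1.const_mul l).add (hB1.const_mul (1 - l))).const_mul ε
  have hFx_ev : deriv (fun z => u (z, q.2)) =ᶠ[𝓝 q.1]
      fun z => deriv (fun z' => v (z', q.2)) z
        - ε * (l * z ^ (l - 1) + (1 - l) * z ^ (-l)) := by
    filter_upwards [isOpen_Ioi.mem_nhds hq1pos] with z hz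
    have hd1 : DifferentiableAt ℝ (fun z' => v (z', q.2)) z :=
      diffAt_of_contDiffOn2 hreg_x hz
    have heq : (fun z' => u (z', q.2)) =
        fun z' => v (z', q.2) - ε * (z' ^ l + z' ^ (1 - l) + q.2) := by
      funext z'; simp only [hu]
    rw [heq, deriv_fun_sub hd1 (hψ z hz).differentiableAt, (hψ z hz).deriv]
  have hderiv_x : HasDerivAt (deriv (fun z => u (z, q.2)))
      (deriv (deriv (fun z => v (z, q.2))) q.1
        - ε * (l * ((l - 1) * q.1 ^ (l - 2)) + (1 - l) * ((-l) * q.1 ^ (-l - 1)))) q.1 :=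
    (hfx_d.hasDerivAt.sub hψ').congr_of_eventuallyEq hFx_ev
  have hdiff_ev_x : ∀ᶠ z in 𝓝 q.1, DifferentiableAt ℝ (fun z' => u (z', q.2)) z := by
    filter_upwards [isOpen_Ioi.mem_nhds hq1pos] with z hz
    have heq : (fun z' => u (z', q.2)) =
        fun z' => v (z', q.2) - ε * (z' ^ l + z' ^ (1 - l) + q.2) := by
      funext z'; simp only [hu]
    rw [heq]
    exact (diffAt_of_contDiffOn2 hreg_x hz).sub (hψ z hz).differentiableAt
  have hX2 : deriv (deriv (fun z => v (z, q.2))) q.1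
      - ε * (l * ((l - 1) * q.1 ^ (l - 2)) + (1 - l) * ((-l) * q.1 ^ (-l - 1))) ≤ 0 :=
    secondDerivTest hdiff_ev_x hderiv_x hmax_x
  -- combine with the PDE
  have hpq := hpde q.1 q.2 hq1pos hq20
  have hvqq : v (q.1, q.2) = v q := rfl
  rw [hvqq] at hpq
  have hx2 : (0:ℝ) < q.1 ^ 2 := by positivity
  have hll : (0:ℝ) < l * (l - 1) := mul_pos hl0 hl1
  have h5 : l * (l - 1) / q.1 ^ 2 * v q ≤
      ε * (l * ((l - 1) * q.1 ^ (l - 2)) + (1 - l) * ((-l) * q.1 ^ (-l - 1))) := by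
    linarith
  have h6 := mul_le_mul_of_nonneg_right h5 hx2.le
  have e1 : q.1 ^ (l - 2) * q.1 ^ 2 = q.1 ^ l := by
    rw [← Real.rpow_natCast q.1 2, ← Real.rpow_add hq1pos]
    norm_num
  have e2 : q.1 ^ (-l - 1) * q.1 ^ 2 = q.1 ^ (1 - l) := by
    rw [← Real.rpow_natCast q.1 2, ← Real.rpow_add hq1pos]
    congr 1
    push_cast
    ring
  have h7 : l * (l - 1) / q.1 ^ 2 * v q * q.1 ^ 2 = l * (l - 1) * v q := by
    field_simp
  have h8 : ε * (l * ((l - 1) * q.1 ^ (l - 2)) + (1 - l) * ((-l) * q.1 ^ (-l - 1))) * q.1 ^ 2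
      = ε * (l * (l - 1)) * (q.1 ^ (l - 2) * q.1 ^ 2)
        + ε * (l * (l - 1)) * (q.1 ^ (-l - 1) * q.1 ^ 2) := by ring
  rw [h7, h8, e1, e2] at h6
  have h9 : v q ≤ ε * q.1 ^ l + ε * q.1 ^ (1 - l) := by
    have h10 : l * (l - 1) * v q ≤ l * (l - 1) * (ε * q.1 ^ l + ε * q.1 ^ (1 - l)) := by
      calc l * (l - 1) * v q ≤
          ε * (l * (l - 1)) * q.1 ^ l + ε * (l * (l - 1)) * q.1 ^ (1 - l) := h6
        _ = l * (l - 1) * (ε * q.1 ^ l + ε * q.1 ^ (1 - l)) := by ring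
    exact le_of_mul_le_mul_left h10 hll
  have hεq2 := mul_pos hε hq20
  linarith

/-- Uniqueness for λ-harmonic functions, `λ > 1`: a bounded continuous function on
`(0,∞) × [0,∞)`, λ-harmonic on `(0,∞) × (0,∞)` and vanishing on `t = 0`, vanishes
identically. -/
theorem statement11 (l : ℝ) (hl : 1 < l) (v : ℝ × ℝ → ℝ)
    (hbdd : ∃ M, ∀ p ∈ Ioi (0:ℝ) ×ˢ Ici (0:ℝ), |v p| ≤ M)
    (hcont : ContinuousOn v (Ioi (0:ℝ) ×ˢ Ici (0:ℝ)))
    (hreg : ContDiffOn ℝ 2 v (Ioi (0:ℝ) ×ˢ Ioi (0:ℝ)))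
    (hpde : ∀ x t : ℝ, 0 < x → 0 < t →
      deriv (deriv (fun s => v (x, s))) t + deriv (deriv (fun z => v (z, t))) x
        - l * (l - 1) / x ^ 2 * v (x, t) = 0)
    (h0 : ∀ x : ℝ, 0 < x → v (x, 0) = 0) :
    ∀ p ∈ Ioi (0:ℝ) ×ˢ Ici (0:ℝ), v p = 0 := by
  obtain ⟨M, hM⟩ := hbdd
  intro p hp
  have hx : 0 < p.1 := hp.1
  have ht : 0 ≤ p.2 := hp.2
  have hCl : 0 < p.1 ^ l := rpow_pos_of_pos hx l
  have hC1l : 0 < p.1 ^ (1 - l) := rpow_pos_of_pos hx (1 - l)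
  have hC : 0 < p.1 ^ l + p.1 ^ (1 - l) + p.2 := by linarith
  have hup : ∀ ε, 0 < ε → v (p.1, p.2) ≤ ε * (p.1 ^ l + p.1 ^ (1 - l) + p.2) :=
    fun ε hε => key_le l ε hl hε v M hM hcont hreg hpde h0 p.1 p.2 hx ht
  -- the PDE for -v
  have hpde' : ∀ x t : ℝ, 0 < x → 0 < t →
      deriv (deriv (fun s => -v (x, s))) t + deriv (deriv (fun z => -v (z, t))) x
        - l * (l - 1) / x ^ 2 * (-v (x, t)) = 0 := by
    intro x t hx' ht'
    have h1 := hpde x t hx' ht'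
    have h2 : deriv (deriv (fun s => -v (x, s))) t
        = -(deriv (deriv (fun s => v (x, s))) t) := by
      have h : (deriv fun s => -v (x, s)) = fun s => -deriv (fun s' => v (x, s')) s :=
        funext fun y => deriv.neg
      rw [h]
      exact deriv.neg
    have h3 : deriv (deriv (fun z => -v (z, t))) x
        = -(deriv (deriv (fun z => v (z, t))) x) := by
      have h : (deriv fun z => -v (z, t)) = fun z => -deriv (fun z' => v (z', t)) z :=
        funext fun y => deriv.neg
      rw [h]
      exact deriv.neg
    rw [h2, h3]
    linear_combination -h1
  have hupn : ∀ ε, 0 < ε → -v (p.1, p.2) ≤ ε * (p.1 ^ l + p.1 ^ (1 - l) + p.2) := by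
    intro ε hε
    exact key_le l ε hl hε (fun p => -v p) M
      (fun p hp => by rw [abs_neg]; exact hM p hp)
      hcont.neg hreg.neg hpde'
      (fun x hx => by simp [h0 x hx]) p.1 p.2 hx ht
  have hv1 : v (p.1, p.2) ≤ 0 := by
    by_contra h
    push_neg at h
    have hεpos : 0 < v (p.1, p.2) / (2 * (p.1 ^ l + p.1 ^ (1 - l) + p.2)) := by positivity
    have h1 := hup _ hεpos
    have h2 : v (p.1, p.2) / (2 * (p.1 ^ l + p.1 ^ (1 - l) + p.2))
        * (p.1 ^ l + p.1 ^ (1 - l) + p.2) = v (p.1, p.2) / 2 := by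
      field_simp
    rw [h2] at h1
    linarith
  have hv2 : -v (p.1, p.2) ≤ 0 := by
    by_contra h
    push_neg at h
    have hεpos : 0 < -v (p.1, p.2) / (2 * (p.1 ^ l + p.1 ^ (1 - l) + p.2)) := by positivity
    have h1 := hupn _ hεpos
    have h2 : -v (p.1, p.2) / (2 * (p.1 ^ l + p.1 ^ (1 - l) + p.2))
        * (p.1 ^ l + p.1 ^ (1 - l) + p.2) = -v (p.1, p.2) / 2 := by
      field_simp
    rw [h2] at h1
    linarith
  have : v (p.1, p.2) = 0 := le_antisymm hv1 (by linarith)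
  exact this
end

section
/- There exists C > 0 (depending on λ > 0) such that for all θ ∈ (0, π/2) and x, y, t ∈ (0,∞): |(sin θ)^{2λ−1}/((x−y)²+t²+2xy(1−cos θ))^{λ+2} − θ^{2λ−1}/((x−y)²+t²+xyθ²)^{λ+2}| ≤ C θ^{2λ+1}/((x−y)²+t²+xyθ²)^{λ+2}. -/
open Real Set


/-- MVT bound for rpow on a positive interval. -/
lemma aux_rpow_mvt {a b r K : ℝ} (ha : 0 < a) (hab : a ≤ b)
    (hK : ∀ s ∈ Icc a b, |r * s ^ (r - 1)| ≤ K) : |b ^ r - a ^ r| ≤ K * (b - a) := by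
  have h := norm_image_sub_le_of_norm_deriv_le_segment'
    (f := fun s : ℝ => s ^ r) (f' := fun s : ℝ => r * s ^ (r - 1)) (a := a) (b := b)
    (fun s hs => (Real.hasDerivAt_rpow_const
      (Or.inl (ne_of_gt (lt_of_lt_of_le ha hs.1)))).hasDerivWithinAt)
    (fun s hs => hK s ⟨hs.1, hs.2.le⟩) b ⟨hab, le_refl b⟩
  simpa [Real.norm_eq_abs] using h

/-- `1 - cos x ≤ x² / 2`. -/
lemma aux_one_sub_cos_le (x : ℝ) : 1 - Real.cos x ≤ x ^ 2 / 2 := by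
  have h := Real.sin_sq_eq_half_sub (x / 2)
  have h2 : Real.sin (x / 2) ^ 2 ≤ (x / 2) ^ 2 := Real.sin_sq_le_sq
  have : 2 * (x / 2) = x := by ring
  rw [this] at h
  nlinarith

/-- lower bound `(4/π²) x² ≤ 2(1 - cos x)` on `[0, π]`. -/
lemma aux_one_sub_cos_ge {x : ℝ} (hx : 0 ≤ x) (hx2 : x ≤ π) :
    4 / π ^ 2 * x ^ 2 ≤ 2 * (1 - Real.cos x) := by
  have hπ := Real.pi_pos
  have h := Real.sin_sq_eq_half_sub (x / 2)
  have h2 : 2 * (x / 2) = x := by ring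
  rw [h2] at h
  have hs : 2 / π * (x / 2) ≤ Real.sin (x / 2) :=
    Real.mul_le_sin (by linarith) (by linarith)
  have hs0 : 0 ≤ 2 / π * (x / 2) := by positivity
  have hsq : (2 / π * (x / 2)) ^ 2 ≤ Real.sin (x / 2) ^ 2 := by nlinarith
  have hexp : (2 / π * (x / 2)) ^ 2 = x ^ 2 / π ^ 2 := by
    field_simp
  rw [hexp] at hsq
  have hπ2 : (0:ℝ) < π ^ 2 := by positivity
  rw [h] at hsq
  rw [div_le_iff₀ hπ2] at hsq
  rw [div_mul_eq_mul_div, div_le_iff₀ hπ2]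
  nlinarith

/-- On `(0, π/2)`: `θ - sin θ ≤ θ³` and `θ² - 2(1-cos θ) ≤ θ⁴`, etc. -/
lemma aux_theta_sub_sin {θ : ℝ} (h0 : 0 < θ) (h1 : θ < π / 2) : θ - Real.sin θ ≤ θ ^ 3 := by
  have hπ := Real.pi_lt_d2
  have hu1 : θ / 2 ≤ 1 := by linarith
  have hsin : θ / 2 - (θ / 2) ^ 3 / 4 ≤ Real.sin (θ / 2) := by
    have := Real.sin_gt_sub_cube (by linarith : 0 < θ / 2); nlinarith [pow_pos h0 3]
  have hsinub : Real.sin (θ / 2) ≤ θ / 2 := (Real.sin_lt (by linarith)).le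
  have hcosub : Real.cos (θ / 2) ≤ 1 := Real.cos_le_one _
  have hcoslb : 1 - (θ / 2) ^ 2 / 2 ≤ Real.cos (θ / 2) := by
    have := aux_one_sub_cos_le (θ / 2); linarith
  have hs2 : Real.sin θ = 2 * Real.sin (θ / 2) * Real.cos (θ / 2) := by
    have := Real.sin_two_mul (θ / 2)
    rw [show 2 * (θ / 2) = θ by ring] at this
    exact this
  have hnn : 0 ≤ θ / 2 - (θ / 2) ^ 3 / 4 := by nlinarith [sq_nonneg (θ/2)]
  rw [hs2]
  nlinarith [mul_le_mul hsin hcoslb (by nlinarith) (by nlinarith : (0:ℝ) ≤ Real.sin (θ/2))]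

lemma aux_sq_sub_cos {θ : ℝ} (h0 : 0 < θ) (h1 : θ < π / 2) :
    θ ^ 2 - 2 * (1 - Real.cos θ) ≤ θ ^ 4 := by
  have hπ := Real.pi_lt_d2
  have hu1 : θ / 2 ≤ 1 := by linarith
  have hsin : θ / 2 - (θ / 2) ^ 3 / 4 ≤ Real.sin (θ / 2) := by
    have := Real.sin_gt_sub_cube (by linarith : 0 < θ / 2); nlinarith [pow_pos h0 3]
  have h := Real.sin_sq_eq_half_sub (θ / 2)
  rw [show 2 * (θ / 2) = θ by ring] at h
  have hnn : 0 ≤ θ / 2 - (θ / 2) ^ 3 / 4 := by nlinarith [sq_nonneg (θ/2)]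
  nlinarith [sq_nonneg (Real.sin (θ/2)), sq_nonneg θ, pow_pos h0 4,
    mul_le_mul hsin hsin hnn (by nlinarith : (0:ℝ) ≤ Real.sin (θ/2))]

set_option maxHeartbeats 1000000

/-- Comparison of the exact and the approximate kernels: for `θ ∈ (0, π/2)`,
`|sinθ^{2λ-1}/((x-y)²+t²+2xy(1-cosθ))^{λ+2} − θ^{2λ-1}/((x-y)²+t²+xyθ²)^{λ+2}|
  ≤ C θ^{2λ+1}/((x-y)²+t²+xyθ²)^{λ+2}`. -/
theorem statement15 (l : ℝ) (hl : 0 < l) :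
    ∃ C > 0, ∀ θ x y t : ℝ, θ ∈ Ioo 0 (π / 2) → 0 < x → 0 < y → 0 < t →
      |Real.sin θ ^ (2 * l - 1) /
          ((x - y) ^ 2 + t ^ 2 + 2 * x * y * (1 - Real.cos θ)) ^ (l + 2)
        - θ ^ (2 * l - 1) / ((x - y) ^ 2 + t ^ 2 + x * y * θ ^ 2) ^ (l + 2)|
      ≤ C * θ ^ (2 * l + 1) / ((x - y) ^ 2 + t ^ 2 + x * y * θ ^ 2) ^ (l + 2) := by
  have hπ := Real.pi_pos
  set p : ℝ := 2 * l - 1 with hp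
  set q : ℝ := l + 2 with hq
  have hq0 : (0:ℝ) < q := by rw [hq]; linarith
  set M : ℝ := max ((2 / π) ^ (p - 1)) 1 with hM
  have hM1 : (1:ℝ) ≤ M := le_max_right _ _
  have hM0 : (0:ℝ) ≤ M := le_trans zero_le_one hM1
  set A : ℝ := |p| * M + q with hA
  have hA0 : 0 < A := by
    have h1 : 0 ≤ |p| * M := mul_nonneg (abs_nonneg _) hM0
    rw [hA]; linarith
  set C : ℝ := (π ^ 2 / 4) ^ q * A + 1 with hC
  have hκpos : (0:ℝ) < (π ^ 2 / 4) ^ q := Real.rpow_pos_of_pos (by positivity) _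
  have hC0 : 0 < C := by rw [hC]; nlinarith [mul_pos hκpos hA0]
  refine ⟨C, hC0, ?_⟩
  intro θ x y t hθ hx hy ht
  obtain ⟨hθ0, hθ1⟩ := hθ
  have hθπ : θ < π := by linarith
  set s : ℝ := Real.sin θ with hsdef
  have hs0 : 0 < s := Real.sin_pos_of_pos_of_lt_pi hθ0 hθπ
  have hsθ : s ≤ θ := (Real.sin_lt hθ0).le
  have hslow : 2 / π * θ ≤ s := Real.mul_le_sin hθ0.le hθ1.le
  set D : ℝ := (x - y) ^ 2 + t ^ 2 + x * y * θ ^ 2 with hD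
  set E : ℝ := (x - y) ^ 2 + t ^ 2 + 2 * x * y * (1 - Real.cos θ) with hE
  have hD0 : 0 < D := by rw [hD]; positivity
  have hcos_ub : 2 * (1 - Real.cos θ) ≤ θ ^ 2 := by
    have := aux_one_sub_cos_le θ; linarith
  have hcos_lb : 4 / π ^ 2 * θ ^ 2 ≤ 2 * (1 - Real.cos θ) :=
    aux_one_sub_cos_ge hθ0.le hθπ.le
  set k : ℝ := 4 / π ^ 2 with hk
  have hk0 : 0 < k := by rw [hk]; positivity
  have hk1 : k ≤ 1 := by
    rw [hk, div_le_one (by positivity)]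
    nlinarith [Real.pi_gt_three]
  have hED : E ≤ D := by
    rw [hE, hD]; nlinarith [mul_pos hx hy]
  have hE_lb : k * D ≤ E := by
    have hk1' : 4 / π ^ 2 ≤ 1 := by rw [← hk]; exact hk1
    have h1 : 0 ≤ (1 - 4 / π ^ 2) * ((x - y) ^ 2 + t ^ 2) :=
      mul_nonneg (by linarith) (by positivity)
    have h2 : x * y * (4 / π ^ 2 * θ ^ 2) ≤ x * y * (2 * (1 - Real.cos θ)) :=
      mul_le_mul_of_nonneg_left hcos_lb (mul_pos hx hy).le
    rw [hE, hD, hk]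
    nlinarith [h1, h2]
  have hE0 : 0 < E := lt_of_lt_of_le (mul_pos hk0 hD0) hE_lb
  have hDq : 0 < D ^ q := Real.rpow_pos_of_pos hD0 _
  have hEq : 0 < E ^ q := Real.rpow_pos_of_pos hE0 _
  have hEDq : E ^ q ≤ D ^ q := Real.rpow_le_rpow hE0.le hED hq0.le
  have hEq_lb : k ^ q * D ^ q ≤ E ^ q := by
    rw [← Real.mul_rpow hk0.le hD0.le]
    exact Real.rpow_le_rpow (mul_pos hk0 hD0).le hE_lb hq0.le
  have hκk : (π ^ 2 / 4) ^ q * k ^ q = 1 := by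
    rw [← Real.mul_rpow (by positivity) hk0.le,
      show π ^ 2 / 4 * k = 1 by rw [hk]; field_simp]
    exact Real.one_rpow _
  have hθp : (0:ℝ) < θ ^ p := Real.rpow_pos_of_pos hθ0 _
  have hθp1 : (0:ℝ) < θ ^ (p - 1) := Real.rpow_pos_of_pos hθ0 _
  have hθ2l1 : (0:ℝ) < θ ^ (2 * l + 1) := Real.rpow_pos_of_pos hθ0 _
  -- Term a : |s^p - θ^p| ≤ |p| * M * θ^(2l+1)
  have hterm_a : |s ^ p - θ ^ p| ≤ |p| * M * θ ^ (2 * l + 1) := by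
    have hKbound : ∀ u ∈ Icc s θ, |p * u ^ (p - 1)| ≤ |p| * (M * θ ^ (p - 1)) := by
      intro u hu
      have hu0 : 0 < u := lt_of_lt_of_le hs0 hu.1
      have hup : (0:ℝ) < u ^ (p - 1) := Real.rpow_pos_of_pos hu0 _
      rw [abs_mul, abs_of_pos hup]
      refine mul_le_mul_of_nonneg_left ?_ (abs_nonneg _)
      rcases le_or_gt 0 (p - 1) with hsign | hsign
      · calc u ^ (p - 1) ≤ θ ^ (p - 1) := Real.rpow_le_rpow hu0.le hu.2 hsign
          _ ≤ M * θ ^ (p - 1) := le_mul_of_one_le_left hθp1.le hM1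
      · have hlow : 2 / π * θ ≤ u := le_trans hslow hu.1
        calc u ^ (p - 1) ≤ (2 / π * θ) ^ (p - 1) :=
              Real.rpow_le_rpow_of_nonpos (by positivity) hlow hsign.le
          _ = (2 / π) ^ (p - 1) * θ ^ (p - 1) :=
              Real.mul_rpow (by positivity) hθ0.le
          _ ≤ M * θ ^ (p - 1) :=
              mul_le_mul_of_nonneg_right (le_max_left _ _) hθp1.le
    have hmvt := aux_rpow_mvt hs0 hsθ hKbound
    have hsub : θ - s ≤ θ ^ 3 := aux_theta_sub_sin hθ0 hθ1
    have h1 : |s ^ p - θ ^ p| ≤ |p| * (M * θ ^ (p - 1)) * θ ^ 3 := by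
      rw [abs_sub_comm]
      refine hmvt.trans ?_
      exact mul_le_mul_of_nonneg_left hsub
        (mul_nonneg (abs_nonneg _) (mul_nonneg hM0 hθp1.le))
    refine h1.trans (le_of_eq ?_)
    have hpowa : θ ^ (p - 1) * θ ^ (3:ℕ) = θ ^ (2 * l + 1) := by
      rw [← Real.rpow_natCast θ 3, ← Real.rpow_add hθ0]
      congr 1
      rw [hp]; push_cast; ring
    calc |p| * (M * θ ^ (p - 1)) * θ ^ 3
        = |p| * M * (θ ^ (p - 1) * θ ^ (3:ℕ)) := by ring
      _ = |p| * M * θ ^ (2 * l + 1) := by rw [hpowa]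
  -- Term b : θ^p * (D^q - E^q) ≤ q * θ^(2l+1) * D^q
  have hterm_b : θ ^ p * (D ^ q - E ^ q) ≤ q * θ ^ (2 * l + 1) * D ^ q := by
    have hDq1 : (0:ℝ) < D ^ (q - 1) := Real.rpow_pos_of_pos hD0 _
    have hKb : ∀ u ∈ Icc E D, |q * u ^ (q - 1)| ≤ q * D ^ (q - 1) := by
      intro u hu
      have hu0 : 0 < u := lt_of_lt_of_le hE0 hu.1
      rw [abs_mul, abs_of_pos hq0, abs_of_pos (Real.rpow_pos_of_pos hu0 _)]
      exact mul_le_mul_of_nonneg_left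
        (Real.rpow_le_rpow hu0.le hu.2 (by rw [hq]; linarith)) hq0.le
    have hmvt := aux_rpow_mvt hE0 hED hKb
    have hDEq : D ^ q - E ^ q ≤ q * D ^ (q - 1) * (D - E) :=
      (le_abs_self _).trans hmvt
    have hDEdiff : D - E ≤ x * y * θ ^ 4 := by
      have h4 := aux_sq_sub_cos hθ0 hθ1
      rw [hD, hE]
      nlinarith [mul_pos hx hy]
    have hxyθ : x * y * θ ^ 2 ≤ D := by
      rw [hD]; nlinarith [sq_nonneg (x - y), sq_nonneg t]
    have hstep : θ ^ p * (D ^ q - E ^ q) ≤ θ ^ p * (q * D ^ (q - 1) * (x * y * θ ^ 4)) := by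
      refine mul_le_mul_of_nonneg_left (hDEq.trans ?_) hθp.le
      exact mul_le_mul_of_nonneg_left hDEdiff (mul_nonneg hq0.le hDq1.le)
    refine hstep.trans ?_
    have hpow : θ ^ p * θ ^ (4:ℕ) = θ ^ (2 * l + 1) * θ ^ (2:ℕ) := by
      rw [← Real.rpow_natCast θ 4, ← Real.rpow_natCast θ 2, ← Real.rpow_add hθ0,
        ← Real.rpow_add hθ0]
      congr 1
      rw [hp]; push_cast; ring
    have hDpow : D ^ (q - 1) * D = D ^ q := by
      nth_rewrite 2 [← Real.rpow_one D]
      rw [← Real.rpow_add hD0]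
      congr 1
      ring
    calc θ ^ p * (q * D ^ (q - 1) * (x * y * θ ^ 4))
        = q * (θ ^ p * θ ^ (4:ℕ)) * (x * y) * D ^ (q - 1) := by ring
      _ = q * θ ^ (2 * l + 1) * (x * y * θ ^ 2) * D ^ (q - 1) := by rw [hpow]; ring
      _ ≤ q * θ ^ (2 * l + 1) * D * D ^ (q - 1) := by
          refine mul_le_mul_of_nonneg_right
            (mul_le_mul_of_nonneg_left hxyθ (mul_nonneg hq0.le hθ2l1.le)) hDq1.le
      _ = q * θ ^ (2 * l + 1) * D ^ q := by rw [mul_assoc, mul_comm D, hDpow]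
  -- Put everything together
  have main : |s ^ p * D ^ q - θ ^ p * E ^ q| ≤ C * θ ^ (2 * l + 1) * E ^ q := by
    have decomp : s ^ p * D ^ q - θ ^ p * E ^ q
        = (s ^ p - θ ^ p) * D ^ q + θ ^ p * (D ^ q - E ^ q) := by ring
    calc |s ^ p * D ^ q - θ ^ p * E ^ q|
        ≤ |s ^ p - θ ^ p| * D ^ q + θ ^ p * (D ^ q - E ^ q) := by
          rw [decomp]
          refine (abs_add_le _ _).trans ?_
          rw [abs_mul, abs_of_pos hDq,
            abs_of_nonneg (mul_nonneg hθp.le (by linarith : (0:ℝ) ≤ D ^ q - E ^ q))]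
      _ ≤ |p| * M * θ ^ (2 * l + 1) * D ^ q + q * θ ^ (2 * l + 1) * D ^ q :=
          add_le_add (mul_le_mul_of_nonneg_right hterm_a hDq.le) hterm_b
      _ = A * θ ^ (2 * l + 1) * D ^ q := by rw [hA]; ring
      _ ≤ C * θ ^ (2 * l + 1) * E ^ q := by
          have h1 : A * D ^ q ≤ C * E ^ q := by
            have h2 : A * D ^ q = (π ^ 2 / 4) ^ q * A * (k ^ q * D ^ q) := by
              rw [show (π ^ 2 / 4) ^ q * A * (k ^ q * D ^ q)
                  = ((π ^ 2 / 4) ^ q * k ^ q) * (A * D ^ q) by ring, hκk, one_mul]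
            rw [h2]
            calc (π ^ 2 / 4) ^ q * A * (k ^ q * D ^ q)
                ≤ (π ^ 2 / 4) ^ q * A * E ^ q :=
                  mul_le_mul_of_nonneg_left hEq_lb (mul_pos hκpos hA0).le
              _ ≤ C * E ^ q := by
                  refine mul_le_mul_of_nonneg_right ?_ hEq.le
                  rw [hC]; linarith
          calc A * θ ^ (2 * l + 1) * D ^ q = θ ^ (2 * l + 1) * (A * D ^ q) := by ring
            _ ≤ θ ^ (2 * l + 1) * (C * E ^ q) := mul_le_mul_of_nonneg_left h1 hθ2l1.le
            _ = C * θ ^ (2 * l + 1) * E ^ q := by ring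
  have hsplit : |s ^ p / E ^ q - θ ^ p / D ^ q|
      = |s ^ p * D ^ q - θ ^ p * E ^ q| / (E ^ q * D ^ q) := by
    rw [div_sub_div _ _ hEq.ne' hDq.ne', abs_div, abs_of_pos (mul_pos hEq hDq),
      mul_comm (E ^ q) (θ ^ p)]
  rw [hsplit]
  calc |s ^ p * D ^ q - θ ^ p * E ^ q| / (E ^ q * D ^ q)
      ≤ C * θ ^ (2 * l + 1) * E ^ q / (E ^ q * D ^ q) :=
        (div_le_div_iff_of_pos_right (mul_pos hEq hDq)).mpr main
    _ = C * θ ^ (2 * l + 1) / D ^ q := by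
        rw [mul_comm (E ^ q) (D ^ q)]
        exact mul_div_mul_right _ _ hEq.ne'
end
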